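/- Let m > 1 be a real number. Then: (i) for all a, b ≥ 0, (a−b)(a^{m−1}−b^{m−1}) ≥ (4(m−1)/m²) (a^{m/2}−b^{m/2})²; (ii) for all a, b ≥ 0, (a²−b²)(a^{m−1}−b^{m−1}) ≥ (8(m−1)/(m+1)²) (a^{(m+1)/2}−b^{(m+1)/2})²; (iii) for all a, b ≥ c > 0, (a−b)² ≤ c^{−(m−1)} (a^{(m+1)/2}−b^{(m+1)/2})². -/

import Mathlib

open MeasureTheory Set

lemma cs_rpow {p q a b : ℝ} (hp : -1 < p) (hq : -1 < q) (hb : 0 ≤ b) (hab : b ≤ a) :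
    (∫ t in b..a, t ^ ((p+q)/2)) ^ 2 ≤ (∫ t in b..a, t ^ p) * (∫ t in b..a, t ^ q) := by
  rcases eq_or_lt_of_le hab with rfl | hba
  · simp
  have hpq : (-1:ℝ) < (p+q)/2 := by linarith
  set A := ∫ t in b..a, t ^ p with hA
  set B := ∫ t in b..a, t ^ ((p+q)/2) with hB
  set C := ∫ t in b..a, t ^ q with hC
  have hCpos : 0 < C := by
    rw [hC, integral_rpow (Or.inl hq)]
    have h1 : b ^ (q+1) < a ^ (q+1) := Real.rpow_lt_rpow hb hba (by linarith)
    exact div_pos (by linarith) (by linarith)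
  have key : ∀ l : ℝ, 0 ≤ A - 2*l*B + l^2*C := by
    intro l
    have hip : IntervalIntegrable (fun t : ℝ => t ^ p) volume b a :=
      intervalIntegral.intervalIntegrable_rpow' hp
    have hiq : IntervalIntegrable (fun t : ℝ => t ^ q) volume b a :=
      intervalIntegral.intervalIntegrable_rpow' hq
    have hipq : IntervalIntegrable (fun t : ℝ => t ^ ((p+q)/2)) volume b a :=
      intervalIntegral.intervalIntegrable_rpow' hpq
    have hsplit : (∫ t in b..a, (t^p - 2*l*t^((p+q)/2) + l^2*t^q))
        = A - 2*l*B + l^2*C := by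
      rw [intervalIntegral.integral_add (hip.sub (hipq.const_mul (2*l)))
            (hiq.const_mul (l^2)),
          intervalIntegral.integral_sub hip (hipq.const_mul (2*l)),
          intervalIntegral.integral_const_mul, intervalIntegral.integral_const_mul]
    rw [← hsplit]
    apply intervalIntegral.integral_nonneg_of_ae_restrict hab
    have h0 : ∀ᵐ (t:ℝ), t ≠ 0 := by
      rw [ae_iff]
      simp [show {t : ℝ | ¬ t ≠ 0} = {0} by ext; simp]
    filter_upwards [ae_restrict_mem measurableSet_Icc, ae_restrict_of_ae h0] with t ht ht0
    have htpos : 0 < t := lt_of_le_of_ne (hb.trans ht.1) (Ne.symm ht0)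
    have e1 : t ^ p = (t^(p/2))^2 := by
      rw [← Real.rpow_natCast (t^(p/2)) 2, ← Real.rpow_mul htpos.le]
      norm_num
    have e2 : t ^ q = (t^(q/2))^2 := by
      rw [← Real.rpow_natCast (t^(q/2)) 2, ← Real.rpow_mul htpos.le]
      norm_num
    have e3 : t ^ ((p+q)/2) = t^(p/2) * t^(q/2) := by
      rw [← Real.rpow_add htpos]
      ring_nf
    simp only [Pi.zero_apply]
    rw [e1, e2, e3]
    nlinarith [sq_nonneg (t^(p/2) - l * t^(q/2))]
  have h := key (B/C)
  have h2 : 0 ≤ (A - 2*(B/C)*B + (B/C)^2*C) * C := mul_nonneg h hCpos.le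
  have h3 : (A - 2*(B/C)*B + (B/C)^2*C) * C = A*C - B^2 := by
    field_simp
    ring
  linarith [h2, h3.symm ▸ h2]


lemma part1 {m a b : ℝ} (hm : 1 < m) (hb : 0 ≤ b) (hab : b ≤ a) :
    (4 * (m - 1) / m ^ 2) * (a ^ (m/2) - b ^ (m/2)) ^ 2
      ≤ (a - b) * (a ^ (m - 1) - b ^ (m - 1)) := by
  have h := cs_rpow (p := m-2) (q := 0) (by linarith) (by norm_num) hb hab
  rw [integral_rpow (Or.inl (by linarith : (-1:ℝ) < m-2)),
      integral_rpow (Or.inl (by norm_num : (-1:ℝ) < 0)),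
      integral_rpow (Or.inl (by linarith : (-1:ℝ) < (m-2+0)/2))] at h
  rw [show (m-2+0)/2+1 = m/2 by ring, show m-2+1 = m-1 by ring,
      show (0:ℝ)+1 = 1 by norm_num, Real.rpow_one, Real.rpow_one] at h
  have hm1 : (0:ℝ) < m - 1 := by linarith
  have hm0 : (0:ℝ) < m := by linarith
  set X := a ^ (m/2) - b ^ (m/2) with hXd
  set Y := a ^ (m-1) - b ^ (m-1) with hYd
  clear_value X Y
  have h' : X^2/(m/2)^2 ≤ Y*(a-b)/(m-1) := by
    rw [div_pow] at h
    calc X^2/(m/2)^2 ≤ Y/(m-1) * ((a-b)/1) := h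
    _ = Y*(a-b)/(m-1) := by ring
  have h2 := (div_le_div_iff₀ (by positivity) hm1).mp h'
  rw [div_mul_eq_mul_div, div_le_iff₀ (by positivity : (0:ℝ) < m^2)]
  nlinarith [h2]

lemma part2 {m a b : ℝ} (hm : 1 < m) (hb : 0 ≤ b) (hab : b ≤ a) :
    (8 * (m - 1) / (m + 1) ^ 2) * (a ^ ((m + 1)/2) - b ^ ((m + 1)/2)) ^ 2
      ≤ (a ^ 2 - b ^ 2) * (a ^ (m - 1) - b ^ (m - 1)) := by
  have h := cs_rpow (p := 1) (q := m-2) (by norm_num) (by linarith) hb hab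
  rw [integral_rpow (Or.inl (by norm_num : (-1:ℝ) < 1)),
      integral_rpow (Or.inl (by linarith : (-1:ℝ) < m-2)),
      integral_rpow (Or.inl (by linarith : (-1:ℝ) < (1+(m-2))/2))] at h
  rw [show (1+(m-2))/2+1 = (m+1)/2 by ring, show m-2+1 = m-1 by ring,
      show (1:ℝ)+1 = 2 by norm_num,
      Real.rpow_two, Real.rpow_two] at h
  have hm1 : (0:ℝ) < m - 1 := by linarith
  have hp1 : (0:ℝ) < m + 1 := by linarith
  set X := a ^ ((m+1)/2) - b ^ ((m+1)/2) with hXd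
  set Y := a ^ (m-1) - b ^ (m-1) with hYd
  clear_value X Y
  rw [div_pow] at h
  have hpos : (0:ℝ) < ((m+1)/2)^2 := by positivity
  have h3 := mul_le_mul_of_nonneg_right ((div_le_iff₀ hpos).mp h)
    (le_of_lt (show (0:ℝ) < 2*(m-1) by linarith))
  have hne : m - 1 ≠ 0 := by linarith
  have h4 : ((a^2-b^2)/2*(Y/(m-1)))*((m+1)/2)^2*(2*(m-1))
      = (a^2-b^2)*Y*((m+1)/2)^2 := by field_simp
  have h2 : X^2*(2*(m-1)) ≤ (a^2-b^2)*Y*((m+1)/2)^2 := by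
    calc X^2*(2*(m-1)) = X^2*(2*(m-1)) := rfl
    _ ≤ _ := h3
    _ = _ := h4
  rw [div_mul_eq_mul_div, div_le_iff₀ (by positivity : (0:ℝ) < (m+1)^2)]
  nlinarith [h2]

lemma part3 {m a b c : ℝ} (hm : 1 < m) (hc : 0 < c) (hca : c ≤ a) (hcb : c ≤ b)
    (hab : b ≤ a) :
    (a - b) ^ 2 ≤ c ^ (-(m - 1)) * (a ^ ((m + 1)/2) - b ^ ((m + 1)/2)) ^ 2 := by
  have hr : (-1:ℝ) < (m-1)/2 := by linarith
  have hint := intervalIntegral.integral_mono_on (μ := volume) (f := fun _ => c^((m-1)/2))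
    (g := fun t : ℝ => t ^ ((m-1)/2)) hab intervalIntegrable_const
    (intervalIntegral.intervalIntegrable_rpow' hr)
    (fun t ht => Real.rpow_le_rpow hc.le (le_trans hcb ht.1) (by linarith))
  rw [intervalIntegral.integral_const, integral_rpow (Or.inl hr), smul_eq_mul,
      show (m-1)/2+1 = (m+1)/2 by ring] at hint
  set K := c ^ ((m-1)/2) with hK
  set S := a ^ ((m+1)/2) - b ^ ((m+1)/2) with hSd
  clear_value K S
  have hKpos : 0 < K := by rw [hK]; exact Real.rpow_pos_of_pos hc _
  have hD : 0 ≤ a - b := by linarith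
  have hS : (a-b)*K ≤ S := by
    have hm2 : (1:ℝ) ≤ (m+1)/2 := by linarith
    have h5 := (le_div_iff₀ (by linarith : (0:ℝ) < (m+1)/2)).mp hint
    have h6 : 0 ≤ (a-b)*K*((m-1)/2) :=
      mul_nonneg (mul_nonneg hD hKpos.le) (by linarith)
    nlinarith [h5, h6]
  have hK2 : K^2 = c ^ (m-1) := by
    rw [hK, ← Real.rpow_natCast (c^((m-1)/2)) 2, ← Real.rpow_mul hc.le]
    norm_num
  have hcpos : (0:ℝ) < c ^ (m-1) := Real.rpow_pos_of_pos hc _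
  rw [Real.rpow_neg hc.le, inv_mul_eq_div, le_div_iff₀ hcpos]
  have h7 : ((a-b)*K)^2 ≤ S^2 := by
    have := mul_nonneg hD hKpos.le
    nlinarith [hS]
  calc (a-b)^2 * c^(m-1) = ((a-b)*K)^2 := by rw [← hK2]; ring
  _ ≤ S^2 := h7

/-- Appendix inequalities (Lemma A.1): for every real `m > 1`,
(i) `(a−b)(a^{m−1}−b^{m−1}) ≥ (4(m−1)/m²)(a^{m/2}−b^{m/2})²` for `a, b ≥ 0`;
(ii) `(a²−b²)(a^{m−1}−b^{m−1}) ≥ (8(m−1)/(m+1)²)(a^{(m+1)/2}−b^{(m+1)/2})²` for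
`a, b ≥ 0`;
(iii) `(a−b)² ≤ c^{−(m−1)}(a^{(m+1)/2}−b^{(m+1)/2})²` for `a, b ≥ c > 0`.
All powers are real powers. -/
theorem useful_inequalities (m : ℝ) (hm : 1 < m) :
    (∀ a b : ℝ, 0 ≤ a → 0 ≤ b →
      (4 * (m - 1) / m ^ 2) * (a ^ (m/2) - b ^ (m/2)) ^ 2
        ≤ (a - b) * (a ^ (m - 1) - b ^ (m - 1))) ∧
    (∀ a b : ℝ, 0 ≤ a → 0 ≤ b →
      (8 * (m - 1) / (m + 1) ^ 2) * (a ^ ((m + 1)/2) - b ^ ((m + 1)/2)) ^ 2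
        ≤ (a ^ 2 - b ^ 2) * (a ^ (m - 1) - b ^ (m - 1))) ∧
    (∀ a b c : ℝ, 0 < c → c ≤ a → c ≤ b →
      (a - b) ^ 2 ≤ c ^ (-(m - 1)) * (a ^ ((m + 1)/2) - b ^ ((m + 1)/2)) ^ 2) := by
  refine ⟨fun a b ha hb => ?_, fun a b ha hb => ?_, fun a b c hc hca hcb => ?_⟩
  · rcases le_total b a with h | h
    · exact part1 hm hb h
    · have h1 := part1 hm ha h
      nlinarith [h1]
  · rcases le_total b a with h | h
    · exact part2 hm hb h
    · have h1 := part2 hm ha h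
      nlinarith [h1]
  · rcases le_total b a with h | h
    · exact part3 hm hc hca hcb h
    · have h1 := part3 hm hc hcb hca h
      nlinarith [h1]
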